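/- For g = [[A, B],[C, D]] ∈ SU(p,q) and Λ a p×q complex matrix with Λ Λᴴ < 1_p (spectral norm less than 1), the matrix Bᵀ Λ + Dᵀ is invertible, and the Möbius-type action Λ ↦ (Aᵀ Λ + Cᵀ)(Bᵀ Λ + Dᵀ)⁻¹ maps the set D_{p,q} = {Λ : 1_p − Λ Λᴴ > 0} to itself. -/

import Mathlib

open Matrix
open scoped ComplexOrder

/-- If `1 - M Mᴴ` is positive definite, so is `1 - Mᴴ M`. -/
lemma posDef_one_sub_conjTranspose_mul {m n : Type*} [Fintype m] [Fintype n]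
    [DecidableEq m] [DecidableEq n] (M : Matrix m n ℂ)
    (h : (1 - M * Mᴴ).PosDef) : (1 - Mᴴ * M).PosDef := by
  have hinv : (1 - M * Mᴴ)⁻¹ * (1 - M * Mᴴ) = 1 :=
    Matrix.nonsing_inv_mul _ ((Matrix.isUnit_iff_isUnit_det _).mp h.isUnit)
  set G : Matrix m m ℂ := (1 - M * Mᴴ)⁻¹ with hG
  set N : Matrix n n ℂ := 1 + Mᴴ * G * M with hN
  have hNpd : N.PosDef := Matrix.PosDef.add_posSemidef Matrix.PosDef.one
    (h.inv.posSemidef.conjTranspose_mul_mul_same M)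
  have e0 : (1 - M * Mᴴ) * M = M - M * (Mᴴ * M) := by
    rw [Matrix.sub_mul, Matrix.one_mul, Matrix.mul_assoc]
  have e1 : G * M - G * (M * (Mᴴ * M)) = M := by
    rw [← Matrix.mul_sub, ← e0, ← Matrix.mul_assoc, hG, hinv, Matrix.one_mul]
  have hmul : N * (1 - Mᴴ * M) = 1 := by
    have expand : N * (1 - Mᴴ * M)
        = 1 - Mᴴ * M + Mᴴ * (G * M - G * (M * (Mᴴ * M))) := by
      rw [hN]
      simp only [Matrix.add_mul, Matrix.mul_sub, Matrix.sub_mul, Matrix.mul_add,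
        Matrix.mul_one, Matrix.one_mul, Matrix.mul_assoc]
      abel
    rw [expand, e1]
    abel
  rw [show (1 : Matrix n n ℂ) - Mᴴ * M = N⁻¹ from (Matrix.inv_eq_right_inv hmul).symm]
  exact hNpd.inv

theorem SU_pq_moebius_maps_D_to_D (p q : ℕ) (hp : 1 ≤ p) (hq : 1 ≤ q)
    (g : Matrix (Fin p ⊕ Fin q) (Fin p ⊕ Fin q) ℂ)
    (hg : g * Matrix.fromBlocks 1 0 0 (-1) * gᴴ = Matrix.fromBlocks 1 0 0 (-1))
    (hdet : g.det = 1)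
    (Λ : Matrix (Fin p) (Fin q) ℂ)
    (hΛ : (1 - Λ * Λᴴ).PosDef) :
    IsUnit ((g.toBlocks₁₂)ᵀ * Λ + (g.toBlocks₂₂)ᵀ) ∧
    (1 - ((g.toBlocks₁₁)ᵀ * Λ + (g.toBlocks₂₁)ᵀ) * ((g.toBlocks₁₂)ᵀ * Λ + (g.toBlocks₂₂)ᵀ)⁻¹ *
      (((g.toBlocks₁₁)ᵀ * Λ + (g.toBlocks₂₁)ᵀ) * ((g.toBlocks₁₂)ᵀ * Λ + (g.toBlocks₂₂)ᵀ)⁻¹)ᴴ).PosDef := by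
  set P := (g.toBlocks₁₁)ᵀ
  set Q := (g.toBlocks₂₁)ᵀ
  set R := (g.toBlocks₁₂)ᵀ
  set S := (g.toBlocks₂₂)ᵀ
  have hct : (gᴴ)ᵀ = (gᵀ)ᴴ := by
    ext i j; simp [Matrix.conjTranspose_apply, Matrix.transpose_apply]
  have hJt : (Matrix.fromBlocks 1 0 0 (-1) :
      Matrix (Fin p ⊕ Fin q) (Fin p ⊕ Fin q) ℂ)ᵀ = Matrix.fromBlocks 1 0 0 (-1) := by
    simp [Matrix.fromBlocks_transpose]
  -- from hg, by transposing: gᵀᴴ * J * gᵀ = J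
  have hgt : (gᵀ)ᴴ * Matrix.fromBlocks 1 0 0 (-1) * gᵀ = Matrix.fromBlocks 1 0 0 (-1) := by
    have h2 := congrArg Matrix.transpose hg
    rw [Matrix.transpose_mul, Matrix.transpose_mul, hJt, hct, ← Matrix.mul_assoc] at h2
    exact h2
  have hgblocks : gᵀ = Matrix.fromBlocks P Q R S := by
    rw [show g = Matrix.fromBlocks g.toBlocks₁₁ g.toBlocks₁₂ g.toBlocks₂₁ g.toBlocks₂₂ from
      (Matrix.fromBlocks_toBlocks g).symm, Matrix.fromBlocks_transpose]
  rw [hgblocks, Matrix.fromBlocks_conjTranspose] at hgt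
  rw [show (Matrix.fromBlocks Pᴴ Rᴴ Qᴴ Sᴴ * Matrix.fromBlocks 1 0 0 (-1) *
      Matrix.fromBlocks P Q R S : Matrix (Fin p ⊕ Fin q) (Fin p ⊕ Fin q) ℂ)
      = Matrix.fromBlocks (Pᴴ * P - Rᴴ * R) (Pᴴ * Q - Rᴴ * S)
        (Qᴴ * P - Sᴴ * R) (Qᴴ * Q - Sᴴ * S) by
    simp [Matrix.fromBlocks_multiply, sub_eq_add_neg]] at hgt
  have e11 : Pᴴ * P - Rᴴ * R = 1 := by
    have := congrArg Matrix.toBlocks₁₁ hgt; simpa using this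
  have e12 : Pᴴ * Q - Rᴴ * S = 0 := by
    have := congrArg Matrix.toBlocks₁₂ hgt; simpa using this
  have e21 : Qᴴ * P - Sᴴ * R = 0 := by
    have := congrArg Matrix.toBlocks₂₁ hgt; simpa using this
  have e22 : Qᴴ * Q - Sᴴ * S = -1 := by
    have := congrArg Matrix.toBlocks₂₂ hgt; simpa using this
  set X := P * Λ + Q with hX
  set Y := R * Λ + S with hY
  -- rearranged block relations
  have k1 : Pᴴ * P = 1 + Rᴴ * R := by
    rw [← e11]; abel
  have k4 : Sᴴ * S = 1 + Qᴴ * Q := by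
    have : Sᴴ * S - Qᴴ * Q = 1 := by rw [← neg_sub (Qᴴ * Q), e22, neg_neg]
    rw [← this]; abel
  have r1 : Pᴴ * (P * Λ) = Λ + Rᴴ * (R * Λ) := by
    rw [← Matrix.mul_assoc, k1, Matrix.add_mul, Matrix.one_mul, Matrix.mul_assoc]
  have r2 : Pᴴ * Q = Rᴴ * S := sub_eq_zero.mp e12
  have r3 : Qᴴ * (P * Λ) = Sᴴ * (R * Λ) := by
    rw [← Matrix.mul_assoc, sub_eq_zero.mp e21, Matrix.mul_assoc]
  -- key identity
  have key : Yᴴ * Y = Xᴴ * X + (1 - Λᴴ * Λ) := by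
    rw [hX, hY]
    simp only [Matrix.conjTranspose_add, Matrix.conjTranspose_mul, Matrix.add_mul,
      Matrix.mul_add, Matrix.mul_assoc, r1, r2, r3, k4, sub_eq_add_neg]
    abel
  have hΛ' : (1 - Λᴴ * Λ).PosDef := posDef_one_sub_conjTranspose_mul Λ hΛ
  have hYY : (Yᴴ * Y).PosDef := by
    rw [key]
    exact Matrix.PosDef.posSemidef_add (Matrix.posSemidef_conjTranspose_mul_self X) hΛ'
  have hYunit : IsUnit Y := by
    refine (Matrix.isUnit_iff_isUnit_det _).mpr ?_
    have hne := hYY.det_pos.ne'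
    rw [Matrix.det_mul, Matrix.det_conjTranspose] at hne
    exact (IsUnit.mul_iff.mp (Ne.isUnit hne)).2
  refine ⟨hYunit, ?_⟩
  set Z := Y⁻¹ with hZ
  have hYZ : Y * Z = 1 := Matrix.mul_nonsing_inv _ ((Matrix.isUnit_iff_isUnit_det _).mp hYunit)
  have hZY : Zᴴ * Yᴴ = 1 := by
    rw [← Matrix.conjTranspose_mul, hYZ, Matrix.conjTranspose_one]
  have t2 : Zᴴ * (Yᴴ * (Y * Z)) = 1 := by
    rw [hYZ, Matrix.mul_one, hZY]
  have hXX : Xᴴ * X = Yᴴ * Y - (1 - Λᴴ * Λ) := by rw [key]; abel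
  have hcong1 : 1 - (X * Z)ᴴ * (X * Z) = Zᴴ * (1 - Λᴴ * Λ) * Z := by
    have t1 : (X * Z)ᴴ * (X * Z) = Zᴴ * ((Yᴴ * Y - (1 - Λᴴ * Λ)) * Z) := by
      rw [Matrix.conjTranspose_mul, ← hXX]
      simp only [Matrix.mul_assoc]
    rw [t1, Matrix.sub_mul, Matrix.mul_sub, Matrix.mul_assoc Yᴴ Y Z, t2,
      ← Matrix.mul_assoc Zᴴ]
    abel
  have hcong : (1 - (X * Z)ᴴ * (X * Z)).PosDef := by
    rw [hcong1]
    refine Matrix.PosDef.of_dotProduct_mulVec_pos ?_ ?_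
    · exact Matrix.isHermitian_conjTranspose_mul_mul _ hΛ'.isHermitian
    · intro x hx
      have hx' : Z *ᵥ x ≠ 0 := by
        intro hc
        apply hx
        have h3 := congrArg (fun v => Y *ᵥ v) hc
        simpa [Matrix.mulVec_mulVec, hYZ] using h3
      simpa only [Matrix.star_mulVec, Matrix.dotProduct_mulVec, Matrix.vecMul_vecMul]
        using hΛ'.dotProduct_mulVec_pos hx'
  have final := posDef_one_sub_conjTranspose_mul (X * Z)ᴴ (by simpa using hcong)
  simpa using final
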